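/- Let J_1, …, J_s (s ≥ 1) be finsets of Fin m and let B = J_1 ∪ ⋯ ∪ J_s be their union. Then the subgroup ⋂_t stab(J_t) of Equiv.Perm (Fin m) is isomorphic as a group to H × Equiv.Perm ↥(Bᶜ), where H is the subgroup of Equiv.Perm ↥B consisting of those permutations h of ↥B such that for each t the finset {x : ↥B | ↑x ∈ J_t} is mapped onto itself by h; moreover, under this isomorphism the factor Equiv.Perm ↥(Bᶜ) corresponds to permutations of Fin m that fix every element of every J_t. (This establishes the stabiliser consistency stab(J, m) ≅ stab(J, b(J)) × Σ_{m−b(J)}, where Σ_{m−b(J)} acts trivially on J.) -/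

import Mathlib

/-- The stabilizer `stab(J) = {g | J.image g = J}` of a finset `J` in the symmetric
group `Equiv.Perm α`. -/
def stab {α : Type*} [DecidableEq α] (J : Finset α) : Subgroup (Equiv.Perm α) where
  carrier := {g | J.image ⇑g = J}
  one_mem' := by simp
  mul_mem' := by
    intro g h hg hh
    simp only [Set.mem_setOf_eq] at *
    rw [Equiv.Perm.coe_mul, ← Finset.image_image, hh, hg]
  inv_mem' := by
    intro g hg
    simp only [Set.mem_setOf_eq] at *
    conv_lhs => rw [← hg]
    rw [Finset.image_image]
    simp [Function.comp_def]

theorem mem_stab' {α : Type*} [DecidableEq α] (J : Finset α) (g : Equiv.Perm α) :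
    g ∈ stab J ↔ J.image ⇑g = J := Iff.rfl

/-- For finsets `J_1, …, J_s` of `Fin m` with union `B`, the subgroup
`⋂_t stab(J_t)` of `Equiv.Perm (Fin m)` is isomorphic to `H × Perm ↥(Bᶜ)`, where `H`
is the subgroup of `Perm ↥B` of permutations mapping each `{x : ↥B | ↑x ∈ J_t}` onto
itself; under the isomorphism, the factor `Perm ↥(Bᶜ)` corresponds to the permutations
of `Fin m` fixing every element of every `J_t`. -/
theorem stmt_10 {m s : ℕ} (hs : 1 ≤ s) (J : Fin s → Finset (Fin m))
    (B : Finset (Fin m)) (hB : B = Finset.univ.biUnion J)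
    (H : Subgroup (Equiv.Perm {x // x ∈ B}))
    (hH : H = ⨅ t : Fin s,
      stab (Finset.univ.filter fun x : {x // x ∈ B} => (x : Fin m) ∈ J t)) :
    ∃ e : (↥(⨅ t : Fin s, stab (J t))) ≃* ↥H × Equiv.Perm {x // x ∈ Bᶜ},
      ∀ g : ↥(⨅ t : Fin s, stab (J t)),
        ((e g).1 = 1 ↔ ∀ t : Fin s, ∀ x ∈ J t, (g : Equiv.Perm (Fin m)) x = x) := by
  classical
  set G := ⨅ t : Fin s, stab (J t) with hGdef
  have memG : ∀ g : Equiv.Perm (Fin m), g ∈ G ↔ ∀ t, (J t).image ⇑g = J t := by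
    intro g; simp only [hGdef, Subgroup.mem_iInf, mem_stab']
  have hHmemIff : ∀ h : Equiv.Perm {x // x ∈ B}, h ∈ H → ∀ t,
      (Finset.univ.filter fun x : {x // x ∈ B} => (x : Fin m) ∈ J t).image ⇑h =
      Finset.univ.filter fun x : {x // x ∈ B} => (x : Fin m) ∈ J t := by
    intro h hh t
    rw [hH, Subgroup.mem_iInf] at hh
    exact hh t
  have hJB : ∀ t, J t ⊆ B := by
    intro t x hx; rw [hB]; exact Finset.mem_biUnion.2 ⟨t, Finset.mem_univ t, hx⟩
  have hBim : ∀ g : Equiv.Perm (Fin m), g ∈ G → B.image ⇑g = B := by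
    intro g hg
    rw [hB, Finset.biUnion_image]
    exact Finset.biUnion_congr rfl fun t _ => (memG g).1 hg t
  have hmem : ∀ g : Equiv.Perm (Fin m), g ∈ G → ∀ x, x ∈ B ↔ g x ∈ B := by
    intro g hg x
    constructor
    · intro hx; rw [← hBim g hg]; exact Finset.mem_image_of_mem _ hx
    · intro hx
      have : g⁻¹ (g x) ∈ B := by
        rw [← hBim g⁻¹ (inv_mem hg)]; exact Finset.mem_image_of_mem _ hx
      simpa using this
  have hmemc : ∀ g : Equiv.Perm (Fin m), g ∈ G → ∀ x, x ∈ Bᶜ ↔ g x ∈ Bᶜ := by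
    intro g hg x; simp [Finset.mem_compl, hmem g hg x]
  -- forward components
  let φB : ∀ g : ↥G, Equiv.Perm {x // x ∈ B} :=
    fun g => (g : Equiv.Perm (Fin m)).subtypePerm (fun x => (hmem g g.2 x).symm)
  let φC : ∀ g : ↥G, Equiv.Perm {x // x ∈ Bᶜ} :=
    fun g => (g : Equiv.Perm (Fin m)).subtypePerm (fun x => (hmemc g g.2 x).symm)
  have hφBH : ∀ g : ↥G, φB g ∈ H := by
    intro g
    rw [hH, Subgroup.mem_iInf]
    intro t
    rw [mem_stab']
    ext y
    simp only [Finset.mem_image, Finset.mem_filter, Finset.mem_univ, true_and]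
    constructor
    · rintro ⟨x, hx, rfl⟩
      have : (g : Equiv.Perm (Fin m)) ↑x ∈ (J t).image ⇑(g : Equiv.Perm (Fin m)) :=
        Finset.mem_image_of_mem _ hx
      rw [(memG _).1 g.2 t] at this
      exact this
    · intro hy
      have : (y : Fin m) ∈ (J t).image ⇑(g : Equiv.Perm (Fin m)) := by
        rw [(memG _).1 g.2 t]; exact hy
      obtain ⟨x, hx, hgx⟩ := Finset.mem_image.1 this
      exact ⟨⟨x, hJB t hx⟩, hx, Subtype.ext hgx⟩
  -- conversion between Perm {x // x ∈ Bᶜ} and Perm {x // ¬ x ∈ B}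
  let ec : {x : Fin m // x ∈ Bᶜ} ≃ {x : Fin m // ¬ x ∈ B} :=
    Equiv.subtypeEquivRight (fun x => Finset.mem_compl)
  -- inverse map
  let ψ : ↥H × Equiv.Perm {x // x ∈ Bᶜ} → Equiv.Perm (Fin m) :=
    fun p => Equiv.Perm.subtypeCongr (p.1 : Equiv.Perm {x // x ∈ B}) (ec.permCongr p.2)
  have ψ_left : ∀ p x (hx : x ∈ B), ψ p x = ((p.1 : Equiv.Perm {x // x ∈ B}) ⟨x, hx⟩ : _) := by
    intro p x hx; exact Equiv.Perm.subtypeCongr.left_apply _ _ hx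
  have ψ_right : ∀ p x (hx : ¬ x ∈ B), ψ p x = (p.2 ⟨x, Finset.mem_compl.2 hx⟩ : _) := by
    intro p x hx
    rw [show ψ p x = (ec.permCongr p.2) ⟨x, hx⟩ from Equiv.Perm.subtypeCongr.right_apply _ _ hx]
    rfl
  have hψG : ∀ p, ψ p ∈ G := by
    intro p
    rw [memG]
    intro t
    have hp1t := hHmemIff _ p.1.2 t
    ext y
    simp only [Finset.mem_image]
    constructor
    · rintro ⟨x, hx, rfl⟩
      have hxB := hJB t hx
      rw [ψ_left p x hxB]
      have : (⟨x, hxB⟩ : {x // x ∈ B}) ∈ Finset.univ.filter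
          fun x : {x // x ∈ B} => (x : Fin m) ∈ J t := by simp [hx]
      rw [← hp1t] at this
      have h2 : (p.1 : Equiv.Perm {x // x ∈ B}) ⟨x, hxB⟩ ∈
          (Finset.univ.filter fun x : {x // x ∈ B} => (x : Fin m) ∈ J t) := by
        rw [← hp1t]
        exact Finset.mem_image_of_mem _ (by simp [hx])
      simpa using (Finset.mem_filter.1 h2).2
    · intro hy
      have hyB := hJB t hy
      have : (⟨y, hyB⟩ : {x // x ∈ B}) ∈ Finset.univ.filter
          fun x : {x // x ∈ B} => (x : Fin m) ∈ J t := by simp [hy]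
      rw [← hp1t] at this
      obtain ⟨z, hz, hz2⟩ := Finset.mem_image.1 this
      refine ⟨z, (Finset.mem_filter.1 hz).2, ?_⟩
      rw [ψ_left p z z.2]
      simp only [Subtype.coe_eta]
      rw [hz2]
  -- the equivalence
  let e : (↥G) ≃* ↥H × Equiv.Perm {x // x ∈ Bᶜ} :=
    { toFun := fun g => (⟨φB g, hφBH g⟩, φC g)
      invFun := fun p => ⟨ψ p, hψG p⟩
      left_inv := by
        intro g
        ext x
        simp only [Subgroup.coe_mk]
        by_cases hx : x ∈ B
        · rw [ψ_left _ x hx]; rfl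
        · rw [ψ_right _ x hx]; rfl
      right_inv := by
        intro p
        refine Prod.ext (Subtype.ext (Equiv.ext fun x => Subtype.ext ?_))
          (Equiv.ext fun x => Subtype.ext ?_)
        · show ψ p ↑x = ↑((p.1 : Equiv.Perm {x // x ∈ B}) x)
          rw [ψ_left p x x.2]
        · show ψ p ↑x = ↑(p.2 x)
          rw [ψ_right p x (Finset.mem_compl.1 x.2)]
      map_mul' := by
        intro g h
        exact Prod.ext (Subtype.ext (Equiv.ext fun x => Subtype.ext rfl))
          (Equiv.ext fun x => Subtype.ext rfl) }
  refine ⟨e, ?_⟩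
  intro g
  constructor
  · intro h1 t x hx
    have hφ : φB g = 1 := congrArg Subtype.val h1
    exact congrArg Subtype.val (Equiv.ext_iff.1 hφ ⟨x, hJB t hx⟩)
  · intro hfix
    refine Subtype.ext (Equiv.ext fun x => Subtype.ext ?_)
    show ((g : Equiv.Perm (Fin m)) ↑x : Fin m) = ↑x
    have hx : (x : Fin m) ∈ Finset.univ.biUnion J := by rw [← hB]; exact x.2
    obtain ⟨t, _, hxt⟩ := Finset.mem_biUnion.1 hx
    exact hfix t ↑x hxt
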